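/- arXiv:math/0309137 — 2 statements merged into one kernel-verified Lean document; each statement's English description precedes it below -/
import Mathlib

section
/- Fix an integer n ≥ 1. The bijection of the previous parametrization is moreover a homeomorphism: the map ℂ × (ℂⁿ ∖ {0}) → C(ℙ¹, ℙⁿ) sending (z₀, z) to the map of projectivizations induced by the injective linear map (a,b) ↦ (a + z₀·b, z₁·b, …, zₙ·b) is a homeomorphism onto the subspace of C(ℙ¹, ℙⁿ) consisting of all linear maps f : ℙ¹ → ℙⁿ with f([1:0]) = [1:0:⋯:0], where C(ℙ¹, ℙⁿ) carries the compact-open topology. (This is the statement Rat₁(n) ≅ ℂ × (ℂⁿ ∖ {0}).) -/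
open scoped LinearAlgebra.Projectivization ContinuousMap
open Topology

/-- The projectivization of a topological vector space carries the quotient topology. -/
instance projectivizationTopology {K V : Type*} [DivisionRing K] [AddCommGroup V] [Module K V]
    [TopologicalSpace V] : TopologicalSpace (Projectivization K V) :=
  instTopologicalSpaceQuotient

/-- The linear map `L_{z₀,z} : ℂ² → ℂ^{n+1}`, `(a, b) ↦ (a + z₀·b, z₁·b, …, zₙ·b)`. -/
noncomputable def ratOneLinearMap (n : ℕ) (z₀ : ℂ) (z : Fin n → ℂ) :
    (Fin 2 → ℂ) →ₗ[ℂ] (Fin (n + 1) → ℂ) :=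
  LinearMap.pi (Fin.cases (LinearMap.proj 0 + z₀ • LinearMap.proj 1)
    (fun j => z j • LinearMap.proj 1))

/-- The basepoint `[1:0:⋯:0]` of `ℙᵐ`. -/
noncomputable def projBasepoint (m : ℕ) : ℙ ℂ (Fin (m + 1) → ℂ) :=
  Projectivization.mk ℂ (Pi.single 0 1) (by
    intro h
    have h0 := congrFun h (0 : Fin (m + 1))
    simp at h0)


section Generic
variable {K V : Type*} [DivisionRing K] [AddCommGroup V] [Module K V]
    [TopologicalSpace V] [TopologicalSpace K] [ContinuousSMul K V]

omit [TopologicalSpace K] [ContinuousSMul K V] in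
lemma mk'_isQuotientMap : IsQuotientMap (Projectivization.mk' K : {v : V // v ≠ 0} → ℙ K V) :=
  isQuotientMap_quotient_mk'

omit [TopologicalSpace K] [ContinuousSMul K V] in
lemma mk'_continuous : Continuous (Projectivization.mk' K : {v : V // v ≠ 0} → ℙ K V) :=
  mk'_isQuotientMap.continuous

lemma mk'_isOpenMap : IsOpenMap (Projectivization.mk' K : {v : V // v ≠ 0} → ℙ K V) := by
  intro U hU
  rw [← (mk'_isQuotientMap (K := K) (V := V)).isOpen_preimage]
  have heq : Projectivization.mk' K ⁻¹' (Projectivization.mk' K '' U) =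
      ⋃ c : Kˣ, (fun w : {v : V // v ≠ 0} =>
        (⟨c • w.1, fun h => w.2 (by simpa using congrArg (c⁻¹ • ·) h)⟩ : {v : V // v ≠ 0}))
          ⁻¹' U := by
    ext w
    simp only [Set.mem_preimage, Set.mem_image, Set.mem_iUnion]
    constructor
    · rintro ⟨u, hu, huw⟩
      obtain ⟨c, hc⟩ := Quotient.exact' huw
      exact ⟨c, by rwa [show (⟨c • w.1, _⟩ : {v : V // v ≠ 0}) = u from Subtype.ext hc]⟩
    · rintro ⟨c, hc⟩
      exact ⟨_, hc, Quotient.sound' ⟨c, rfl⟩⟩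
  rw [heq]
  refine isOpen_iUnion fun c => ?_
  have hcm : Continuous (fun w : {v : V // v ≠ 0} =>
      (⟨c • w.1, fun h => w.2 (by simpa using congrArg (c⁻¹ • ·) h)⟩ : {v : V // v ≠ 0})) :=
    Continuous.subtype_mk (by fun_prop) _
  exact hcm.isOpen_preimage U hU

omit [TopologicalSpace K] [ContinuousSMul K V] in
lemma mk'_surjective :
    Function.Surjective (Projectivization.mk' K : {v : V // v ≠ 0} → ℙ K V) :=
  fun q => ⟨⟨q.rep, q.rep_nonzero⟩, by simpa using q.mk_rep⟩

lemma mk'_isOpenQuotientMap :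
    IsOpenQuotientMap (Projectivization.mk' K : {v : V // v ≠ 0} → ℙ K V) :=
  ⟨mk'_surjective, mk'_continuous, mk'_isOpenMap⟩

end Generic

section Generic2
variable {K V W : Type*} [Field K] [AddCommGroup V] [Module K V] [AddCommGroup W] [Module K W]
    [TopologicalSpace V] [TopologicalSpace W]

lemma projmap_continuous (g : V →ₗ[K] W) (hg : Function.Injective g) (hgc : Continuous g) :
    Continuous (Projectivization.map g hg) := by
  rw [(mk'_isQuotientMap (K := K) (V := V)).continuous_iff]
  have : (Projectivization.map g hg) ∘ (Projectivization.mk' K) =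
      (Projectivization.mk' K) ∘ (fun v : {v : V // v ≠ 0} =>
        (⟨g v.1, fun h => v.2 (hg (by simpa using h))⟩ : {w : W // w ≠ 0})) := by
    funext v
    simp only [Function.comp_apply, Projectivization.mk'_eq_mk, Projectivization.map_mk]
  rw [this]
  exact mk'_continuous.comp (Continuous.subtype_mk (hgc.comp continuous_subtype_val) _)

lemma projmap_congr {g₁ g₂ : V →ₗ[K] W} (h : g₁ = g₂) (h₁ : Function.Injective g₁)
    (h₂ : Function.Injective g₂) :
    Projectivization.map g₁ h₁ = Projectivization.map g₂ h₂ := by subst h; rfl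

lemma projmap_smul (g : V →ₗ[K] W) (hg : Function.Injective g) (c : Kˣ)
    (hg' : Function.Injective ((c : K) • g)) :
    Projectivization.map ((c : K) • g) hg' = Projectivization.map g hg := by
  funext x
  induction x using Projectivization.ind with
  | h v hv =>
    rw [Projectivization.map_mk, Projectivization.map_mk]
    rw [Projectivization.mk_eq_mk_iff]
    exact ⟨c, by simp [Units.smul_def]⟩

end Generic2

noncomputable section RatOne

variable {n : ℕ}

lemma ratOne_apply_zero (z₀ : ℂ) (z : Fin n → ℂ) (v : Fin 2 → ℂ) :
    ratOneLinearMap n z₀ z v 0 = v 0 + z₀ * v 1 := by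
  simp [ratOneLinearMap]

lemma ratOne_apply_succ (z₀ : ℂ) (z : Fin n → ℂ) (v : Fin 2 → ℂ) (j : Fin n) :
    ratOneLinearMap n z₀ z v j.succ = z j * v 1 := by
  simp [ratOneLinearMap]

/-- The vector `(a, z₁, …, zₙ)`. -/
def vecA (n : ℕ) (a : ℂ) (z : Fin n → ℂ) : Fin (n + 1) → ℂ := Fin.cases a z

@[simp] lemma vecA_zero (a : ℂ) (z : Fin n → ℂ) : vecA n a z 0 = a := rfl
@[simp] lemma vecA_succ (a : ℂ) (z : Fin n → ℂ) (j : Fin n) : vecA n a z j.succ = z j := by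
  simp [vecA]

lemma vecA_ne_zero (a : ℂ) {z : Fin n → ℂ} (hz : z ≠ 0) : vecA n a z ≠ 0 := by
  obtain ⟨j, hj⟩ := Function.ne_iff.mp hz
  intro h
  exact hj (by simpa using congrFun h j.succ)

lemma ratOne_injective (z₀ : ℂ) {z : Fin n → ℂ} (hz : z ≠ 0) :
    Function.Injective (ratOneLinearMap n z₀ z) := by
  intro a b hab
  obtain ⟨j, hj⟩ := Function.ne_iff.mp hz
  have h := sub_eq_zero.mpr hab
  rw [← map_sub] at h
  set v := a - b with hv
  have h1 : v 1 = 0 := by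
    have := congrFun h j.succ
    rw [ratOne_apply_succ] at this
    have this2 : z j * v 1 = 0 := by simpa using this
    rcases mul_eq_zero.mp this2 with h|h
    · exact absurd h hj
    · exact h
  have h0 : v 0 = 0 := by
    have := congrFun h 0
    rw [ratOne_apply_zero] at this
    simpa [h1] using this
  have : v = 0 := by
    funext i
    match i with
    | 0 => exact h0
    | 1 => exact h1
  rw [← sub_eq_zero]
  exact this

lemma ratOne_vec01 (z₀ : ℂ) (z : Fin n → ℂ) : ratOneLinearMap n z₀ z ![0, 1] = vecA n z₀ z := by
  funext i
  induction i using Fin.cases with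
  | zero => simp [ratOne_apply_zero]
  | succ j => simp [ratOne_apply_succ]

lemma ratOne_vec11 (z₀ : ℂ) (z : Fin n → ℂ) :
    ratOneLinearMap n z₀ z ![1, 1] = vecA n (1 + z₀) z := by
  funext i
  induction i using Fin.cases with
  | zero => simp [ratOne_apply_zero]
  | succ j => simp [ratOne_apply_succ]

lemma ratOne_single0 (z₀ : ℂ) (z : Fin n → ℂ) :
    ratOneLinearMap n z₀ z (Pi.single 0 1) = Pi.single 0 1 := by
  funext i
  induction i using Fin.cases with
  | zero => simp [ratOne_apply_zero]
  | succ j =>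
    rw [ratOne_apply_succ]
    simp [Pi.single_eq_of_ne (Fin.succ_ne_zero j)]

lemma ratOne_single1 (z₀ : ℂ) (z : Fin n → ℂ) :
    ratOneLinearMap n z₀ z (Pi.single 1 1) = vecA n z₀ z := by
  funext i
  induction i using Fin.cases with
  | zero => simp [ratOne_apply_zero]
  | succ j => simp [ratOne_apply_succ]

/-- `t = v₀/v_{j+1} - u₀/u_{j+1}`. -/
def tAux (n : ℕ) (j : Fin n) (u v : Fin (n + 1) → ℂ) : ℂ :=
  v 0 / v j.succ - u 0 / u j.succ

def gAux (n : ℕ) (j : Fin n) (u v : Fin (n + 1) → ℂ) : ℂ × (Fin n → ℂ) :=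
  ((tAux n j u v)⁻¹ * (u 0 / u j.succ), fun i => (tAux n j u v)⁻¹ * (u i.succ / u j.succ))

lemma tAux_smul_left (j : Fin n) (u v : Fin (n + 1) → ℂ) {c : ℂ} (hc : c ≠ 0) :
    tAux n j (c • u) v = tAux n j u v := by
  simp [tAux, mul_div_mul_left _ _ hc]

lemma tAux_smul_right (j : Fin n) (u v : Fin (n + 1) → ℂ) {c : ℂ} (hc : c ≠ 0) :
    tAux n j u (c • v) = tAux n j u v := by
  simp [tAux, mul_div_mul_left _ _ hc]

lemma gAux_smul_left (j : Fin n) (u v : Fin (n + 1) → ℂ) {c : ℂ} (hc : c ≠ 0) :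
    gAux n j (c • u) v = gAux n j u v := by
  simp [gAux, tAux_smul_left j u v hc, mul_div_mul_left _ _ hc]

lemma gAux_smul_right (j : Fin n) (u v : Fin (n + 1) → ℂ) {c : ℂ} (hc : c ≠ 0) :
    gAux n j u (c • v) = gAux n j u v := by
  simp [gAux, tAux_smul_right j u v hc]

/-- The local inverse, defined on all of `ℙⁿ × ℙⁿ` via representatives. -/
def Gmap (n : ℕ) (j : Fin n) (x y : ℙ ℂ (Fin (n + 1) → ℂ)) : ℂ × (Fin n → ℂ) :=
  gAux n j x.rep y.rep

lemma rep_eq_smul {V : Type*} [AddCommGroup V] [Module ℂ V] (u : V) (hu : u ≠ 0) :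
    ∃ c : ℂˣ, (Projectivization.mk ℂ u hu).rep = (c : ℂ) • u := by
  have h := Projectivization.mk_rep (Projectivization.mk ℂ u hu)
  rw [Projectivization.mk_eq_mk_iff] at h
  obtain ⟨c, hc⟩ := h
  exact ⟨c, by rw [← hc]; rfl⟩

lemma Gmap_mk (j : Fin n) (u v : Fin (n + 1) → ℂ) (hu : u ≠ 0) (hv : v ≠ 0) :
    Gmap n j (Projectivization.mk ℂ u hu) (Projectivization.mk ℂ v hv) = gAux n j u v := by
  obtain ⟨c, hc⟩ := rep_eq_smul u hu
  obtain ⟨d, hd⟩ := rep_eq_smul v hv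
  rw [Gmap, hc, hd, gAux_smul_left _ _ _ c.ne_zero, gAux_smul_right _ _ _ d.ne_zero]

lemma tAux_rep_mk (j : Fin n) (u v : Fin (n + 1) → ℂ) (hu : u ≠ 0) (hv : v ≠ 0) :
    tAux n j (Projectivization.mk ℂ u hu).rep (Projectivization.mk ℂ v hv).rep =
      tAux n j u v := by
  obtain ⟨c, hc⟩ := rep_eq_smul u hu
  obtain ⟨d, hd⟩ := rep_eq_smul v hv
  rw [hc, hd, tAux_smul_left _ _ _ c.ne_zero, tAux_smul_right _ _ _ d.ne_zero]

lemma rep_coord_ne (k : Fin (n + 1)) (u : Fin (n + 1) → ℂ) (hu : u ≠ 0) :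
    (Projectivization.mk ℂ u hu).rep k ≠ 0 ↔ u k ≠ 0 := by
  obtain ⟨c, hc⟩ := rep_eq_smul u hu
  rw [hc]
  simp [c.ne_zero]

/-- Value of `gAux` on the pairs coming from `Rat₁`. -/
lemma gAux_value (j : Fin n) (z₀ : ℂ) (z : Fin n → ℂ) (hj : z j ≠ 0) :
    gAux n j (vecA n z₀ z) (vecA n (1 + z₀) z) = (z₀, z) := by
  have ht : tAux n j (vecA n z₀ z) (vecA n (1 + z₀) z) = (z j)⁻¹ := by
    simp only [tAux, vecA_zero, vecA_succ]
    rw [div_sub_div_same]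
    ring_nf
  refine Prod.ext ?_ ?_
  · simp only [gAux, ht, inv_inv, vecA_zero, vecA_succ]
    field_simp
  · funext i
    simp only [gAux, ht, inv_inv, vecA_succ]
    field_simp

end RatOne

noncomputable section Main

variable {n : ℕ}

def pointA : ℙ ℂ (Fin 2 → ℂ) :=
  Projectivization.mk ℂ ![0, 1] (by intro h; have := congrFun h 1; simp at this)

def pointB : ℙ ℂ (Fin 2 → ℂ) :=
  Projectivization.mk ℂ ![1, 1] (by intro h; have := congrFun h 0; simp at this)

/-- The forward map, as a continuous map. -/
def ratMapCM (n : ℕ) (p : ℂ × {z : Fin n → ℂ // z ≠ 0}) :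
    C(ℙ ℂ (Fin 2 → ℂ), ℙ ℂ (Fin (n + 1) → ℂ)) :=
  ⟨Projectivization.map (ratOneLinearMap n p.1 p.2.1) (ratOne_injective p.1 p.2.2),
    projmap_continuous _ _ (LinearMap.continuous_on_pi _)⟩

lemma ratMapCM_pointA (p : ℂ × {z : Fin n → ℂ // z ≠ 0}) :
    ratMapCM n p pointA = Projectivization.mk ℂ (vecA n p.1 p.2.1) (vecA_ne_zero _ p.2.2) := by
  simp only [ratMapCM, ContinuousMap.coe_mk, pointA, Projectivization.map_mk,
    Projectivization.mk_eq_mk_iff']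
  exact ⟨1, by rw [one_smul, ratOne_vec01]⟩

lemma ratMapCM_pointB (p : ℂ × {z : Fin n → ℂ // z ≠ 0}) :
    ratMapCM n p pointB =
      Projectivization.mk ℂ (vecA n (1 + p.1) p.2.1) (vecA_ne_zero _ p.2.2) := by
  simp only [ratMapCM, ContinuousMap.coe_mk, pointB, Projectivization.map_mk,
    Projectivization.mk_eq_mk_iff']
  exact ⟨1, by rw [one_smul, ratOne_vec11]⟩

lemma ratMapCM_base (p : ℂ × {z : Fin n → ℂ // z ≠ 0}) :
    ratMapCM n p (projBasepoint 1) = projBasepoint n := by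
  simp only [ratMapCM, ContinuousMap.coe_mk, projBasepoint, Projectivization.map_mk,
    Projectivization.mk_eq_mk_iff']
  exact ⟨1, by rw [one_smul, ratOne_single0]⟩

lemma tAux_continuousAt (j : Fin n)
    (q : {u : Fin (n + 1) → ℂ // u ≠ 0} × {v : Fin (n + 1) → ℂ // v ≠ 0})
    (h1 : q.1.1 j.succ ≠ 0) (h2 : q.2.1 j.succ ≠ 0) :
    ContinuousAt (fun q' : {u : Fin (n + 1) → ℂ // u ≠ 0} × {v : Fin (n + 1) → ℂ // v ≠ 0} =>
      tAux n j q'.1.1 q'.2.1) q := by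
  have ha : ∀ k : Fin (n + 1), Continuous
      (fun q' : {u : Fin (n + 1) → ℂ // u ≠ 0} × {v : Fin (n + 1) → ℂ // v ≠ 0} => q'.1.1 k) :=
    fun k => (continuous_apply k).comp (continuous_subtype_val.comp continuous_fst)
  have hb : ∀ k : Fin (n + 1), Continuous
      (fun q' : {u : Fin (n + 1) → ℂ // u ≠ 0} × {v : Fin (n + 1) → ℂ // v ≠ 0} => q'.2.1 k) :=
    fun k => (continuous_apply k).comp (continuous_subtype_val.comp continuous_snd)
  exact (((hb 0).continuousAt).div ((hb j.succ).continuousAt) h2).sub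
    (((ha 0).continuousAt).div ((ha j.succ).continuousAt) h1)

lemma gAuxPair_continuousAt (j : Fin n)
    (q : {u : Fin (n + 1) → ℂ // u ≠ 0} × {v : Fin (n + 1) → ℂ // v ≠ 0})
    (h1 : q.1.1 j.succ ≠ 0) (h2 : q.2.1 j.succ ≠ 0) (h3 : tAux n j q.1.1 q.2.1 ≠ 0) :
    ContinuousAt (fun q' : {u : Fin (n + 1) → ℂ // u ≠ 0} × {v : Fin (n + 1) → ℂ // v ≠ 0} =>
      gAux n j q'.1.1 q'.2.1) q := by
  have ha : ∀ k : Fin (n + 1), Continuous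
      (fun q' : {u : Fin (n + 1) → ℂ // u ≠ 0} × {v : Fin (n + 1) → ℂ // v ≠ 0} => q'.1.1 k) :=
    fun k => (continuous_apply k).comp (continuous_subtype_val.comp continuous_fst)
  have hTi : ContinuousAt (fun q' : {u : Fin (n + 1) → ℂ // u ≠ 0} ×
      {v : Fin (n + 1) → ℂ // v ≠ 0} => (tAux n j q'.1.1 q'.2.1)⁻¹) q :=
    (tAux_continuousAt j q h1 h2).inv₀ h3
  refine ContinuousAt.prodMk ?_ ?_
  · exact hTi.mul (((ha 0).continuousAt).div ((ha j.succ).continuousAt) h1)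
  · refine continuousAt_pi.mpr fun i => ?_
    exact hTi.mul (((ha i.succ).continuousAt).div ((ha j.succ).continuousAt) h1)

lemma W_isOpen (j : Fin n) : IsOpen {q : ℙ ℂ (Fin (n + 1) → ℂ) × ℙ ℂ (Fin (n + 1) → ℂ) |
    q.1.rep j.succ ≠ 0 ∧ q.2.rep j.succ ≠ 0 ∧ tAux n j q.1.rep q.2.rep ≠ 0} := by
  rw [← (mk'_isOpenQuotientMap.prodMap mk'_isOpenQuotientMap).isQuotientMap.isOpen_preimage]
  have hpre : Prod.map (Projectivization.mk' ℂ) (Projectivization.mk' ℂ) ⁻¹'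
      {q : ℙ ℂ (Fin (n + 1) → ℂ) × ℙ ℂ (Fin (n + 1) → ℂ) |
        q.1.rep j.succ ≠ 0 ∧ q.2.rep j.succ ≠ 0 ∧ tAux n j q.1.rep q.2.rep ≠ 0} =
      {q : {u : Fin (n + 1) → ℂ // u ≠ 0} × {v : Fin (n + 1) → ℂ // v ≠ 0} |
        (q.1.1 j.succ ≠ 0 ∧ q.2.1 j.succ ≠ 0) ∧
          (fun q' : {u : Fin (n + 1) → ℂ // u ≠ 0} × {v : Fin (n + 1) → ℂ // v ≠ 0} =>
            tAux n j q'.1.1 q'.2.1) q ∈ ({0}ᶜ : Set ℂ)} := by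
    ext q
    simp only [Set.mem_preimage, Set.mem_setOf_eq, Prod.map_fst, Prod.map_snd,
      Projectivization.mk'_eq_mk, rep_coord_ne, tAux_rep_mk, Set.mem_compl_iff,
      Set.mem_singleton_iff]
    tauto
  rw [hpre]
  have hA : IsOpen {q : {u : Fin (n + 1) → ℂ // u ≠ 0} × {v : Fin (n + 1) → ℂ // v ≠ 0} |
      q.1.1 j.succ ≠ 0 ∧ q.2.1 j.succ ≠ 0} := by
    refine IsOpen.inter ?_ ?_
    · exact isOpen_compl_singleton.preimage
        ((continuous_apply j.succ).comp (continuous_subtype_val.comp continuous_fst))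
    · exact isOpen_compl_singleton.preimage
        ((continuous_apply j.succ).comp (continuous_subtype_val.comp continuous_snd))
  refine ContinuousOn.isOpen_inter_preimage ?_ hA isOpen_compl_singleton
  exact fun q hq => (tAux_continuousAt j q hq.1 hq.2).continuousWithinAt

lemma tAux_value (j : Fin n) (z₀ : ℂ) (z : Fin n → ℂ) :
    tAux n j (vecA n z₀ z) (vecA n (1 + z₀) z) = (z j)⁻¹ := by
  simp only [tAux, vecA_zero, vecA_succ]
  rw [div_sub_div_same]
  ring_nf

lemma ratMapCM_continuous : Continuous (ratMapCM n) := by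
  apply ContinuousMap.continuous_of_continuous_uncurry
  have hq : IsOpenQuotientMap (Prod.map (id : ℂ × {z : Fin n → ℂ // z ≠ 0} → _)
      (Projectivization.mk' ℂ : {v : Fin 2 → ℂ // v ≠ 0} → ℙ ℂ (Fin 2 → ℂ))) :=
    IsOpenQuotientMap.id.prodMap mk'_isOpenQuotientMap
  refine hq.continuous_comp_iff.mp ?_
  have heq : (Function.uncurry fun p x => ratMapCM n p x) ∘
      (Prod.map (id : ℂ × {z : Fin n → ℂ // z ≠ 0} → _) (Projectivization.mk' ℂ)) =
      (Projectivization.mk' ℂ) ∘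
        (fun q : (ℂ × {z : Fin n → ℂ // z ≠ 0}) × {v : Fin 2 → ℂ // v ≠ 0} =>
          (⟨ratOneLinearMap n q.1.1 q.1.2.1 q.2.1, fun h => q.2.2
            (ratOne_injective q.1.1 q.1.2.2 (by rw [map_zero]; exact h))⟩ :
              {w : Fin (n + 1) → ℂ // w ≠ 0})) := by
    funext q
    show ratMapCM n q.1 (Projectivization.mk' ℂ q.2) = _
    simp only [ratMapCM, ContinuousMap.coe_mk, Projectivization.mk'_eq_mk,
      Projectivization.map_mk, Function.comp_apply]
  rw [heq]
  refine mk'_continuous.comp (Continuous.subtype_mk ?_ _)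
  refine continuous_pi fun i => ?_
  induction i using Fin.cases with
  | zero =>
    simp only [ratOne_apply_zero]
    exact ((continuous_apply (0 : Fin 2)).comp (continuous_subtype_val.comp continuous_snd)).add
      ((continuous_fst.comp continuous_fst).mul
        ((continuous_apply (1 : Fin 2)).comp (continuous_subtype_val.comp continuous_snd)))
  | succ j =>
    simp only [ratOne_apply_succ]
    exact ((continuous_apply j).comp (continuous_subtype_val.comp
      (continuous_snd.comp continuous_fst))).mul
      ((continuous_apply (1 : Fin 2)).comp (continuous_subtype_val.comp continuous_snd))

end Main

noncomputable section Main2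
variable {n : ℕ}

lemma single_ne_zero' (k : Fin 2) : (Pi.single k 1 : Fin 2 → ℂ) ≠ 0 := by
  intro h
  have := congrFun h k
  simp at this

lemma ratMapCM_surjective (f : C(ℙ ℂ (Fin 2 → ℂ), ℙ ℂ (Fin (n + 1) → ℂ)))
    (hf1 : ∃ (g : (Fin 2 → ℂ) →ₗ[ℂ] (Fin (n + 1) → ℂ)) (hg : Function.Injective g),
      ⇑f = Projectivization.map g hg)
    (hf2 : f (projBasepoint 1) = projBasepoint n) :
    ∃ p : ℂ × {z : Fin n → ℂ // z ≠ 0}, ⇑(ratMapCM n p) = ⇑f := by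
  obtain ⟨g, hg, hfg⟩ := hf1
  have hgne : ∀ (v : Fin 2 → ℂ), v ≠ 0 → g v ≠ 0 := fun v hv h =>
    hv (hg (by rw [map_zero]; exact h))
  have hb : Projectivization.mk ℂ (g (Pi.single 0 1)) (hgne _ (single_ne_zero' 0)) =
      projBasepoint n := by
    rw [← hf2, congrFun hfg (projBasepoint 1), projBasepoint, Projectivization.map_mk]
  rw [projBasepoint, Projectivization.mk_eq_mk_iff] at hb
  obtain ⟨c, hc⟩ := hb
  have hc' : (c : ℂ) • (Pi.single 0 1 : Fin (n + 1) → ℂ) = g (Pi.single 0 1) := hc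
  set w : Fin (n + 1) → ℂ := (c : ℂ)⁻¹ • g (Pi.single 1 1) with hw
  set z₀ : ℂ := w 0 with hz₀
  set z : Fin n → ℂ := fun i => w i.succ with hzdef
  have hwv : w = vecA n z₀ z := by
    funext i
    induction i using Fin.cases with
    | zero => rfl
    | succ j => simp [vecA, hzdef]
  have hz : z ≠ 0 := by
    intro h0
    have hw0 : w = z₀ • (Pi.single 0 1 : Fin (n + 1) → ℂ) := by
      funext i
      induction i using Fin.cases with
      | zero => simp [hz₀]
      | succ j =>
        have hj := congrFun h0 j
        simp only [Pi.zero_apply] at hj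
        simp only [Pi.smul_apply, Pi.single_eq_of_ne (Fin.succ_ne_zero j), smul_eq_mul, mul_zero]
        exact hj
    have hkey : g (Pi.single 1 1) = g (z₀ • (Pi.single 0 1 : Fin 2 → ℂ)) := by
      calc g (Pi.single 1 1) = (c : ℂ) • w := (smul_inv_smul₀ c.ne_zero _).symm
        _ = (c : ℂ) • (z₀ • (Pi.single 0 1 : Fin (n + 1) → ℂ)) := by rw [hw0]
        _ = z₀ • ((c : ℂ) • (Pi.single 0 1 : Fin (n + 1) → ℂ)) := smul_comm _ _ _
        _ = z₀ • g (Pi.single 0 1) := by rw [hc']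
        _ = g (z₀ • (Pi.single 0 1 : Fin 2 → ℂ)) := by rw [map_smul]
    have h11 := hg hkey
    have := congrFun h11 1
    simp at this
  have hL : (c : ℂ) • ratOneLinearMap n z₀ z = g := by
    refine Module.Basis.ext (Pi.basisFun ℂ (Fin 2)) fun i => ?_
    rw [Pi.basisFun_apply]
    match i with
    | 0 => rw [LinearMap.smul_apply, ratOne_single0, hc']
    | 1 => rw [LinearMap.smul_apply, ratOne_single1, ← hwv, hw, smul_inv_smul₀ c.ne_zero]
  refine ⟨(z₀, ⟨z, hz⟩), ?_⟩
  rw [hfg]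
  show Projectivization.map (ratOneLinearMap n z₀ z) (ratOne_injective z₀ hz) =
    Projectivization.map g hg
  have hg' : Function.Injective ⇑((c : ℂ) • ratOneLinearMap n z₀ z) := hL ▸ hg
  rw [projmap_congr hL.symm hg hg']
  exact (projmap_smul (ratOneLinearMap n z₀ z) (ratOne_injective z₀ hz) c hg').symm

end Main2

noncomputable section Main3
variable {n : ℕ}

lemma ratMapCM_injective {p p' : ℂ × {z : Fin n → ℂ // z ≠ 0}}
    (h : ⇑(ratMapCM n p) = ⇑(ratMapCM n p')) : p = p' := by
  have hA := congrFun h pointA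
  have hB := congrFun h pointB
  rw [ratMapCM_pointA, ratMapCM_pointA, Projectivization.mk_eq_mk_iff'] at hA
  rw [ratMapCM_pointB, ratMapCM_pointB, Projectivization.mk_eq_mk_iff'] at hB
  obtain ⟨a, ha⟩ := hA
  obtain ⟨b, hb⟩ := hB
  obtain ⟨j, hj⟩ := Function.ne_iff.mp p.2.2
  have haj : a * p'.2.1 j = p.2.1 j := by simpa using congrFun ha j.succ
  have hbj : b * p'.2.1 j = p.2.1 j := by simpa using congrFun hb j.succ
  have hz'j : p'.2.1 j ≠ 0 := by
    intro h0
    rw [h0, mul_zero] at haj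
    exact hj haj.symm
  have hab : a = b := mul_right_cancel₀ hz'j (haj.trans hbj.symm)
  have ha0 : a * p'.1 = p.1 := by simpa using congrFun ha 0
  have hb0 : b * (1 + p'.1) = 1 + p.1 := by simpa using congrFun hb 0
  have hb1 : a = 1 := by
    rw [← hab, mul_add, mul_one, ha0] at hb0
    exact add_right_cancel hb0
  have h1 : p.1 = p'.1 := by rw [← ha0, hb1, one_mul]
  have h2 : p.2.1 = p'.2.1 := by
    funext i
    have := congrFun ha i.succ
    simpa [hb1] using this.symm
  exact Prod.ext h1 (Subtype.ext h2)

/-- `Rat₁(n) ≅ ℂ × (ℂⁿ ∖ {0})`: the map sending `(z₀, z)` to the induced map of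
projectivizations of `(a,b) ↦ (a + z₀·b, z₁·b, …, zₙ·b)` is a homeomorphism of
`ℂ × (ℂⁿ ∖ {0})` onto the subspace of `C(ℙ¹, ℙⁿ)` (compact-open topology) consisting of the
linear maps sending `[1:0]` to `[1:0:⋯:0]`. -/
theorem ratOne_homeomorph (n : ℕ) (hn : 1 ≤ n) :
    ∃ (hinj : ∀ (z₀ : ℂ) (z : {z : Fin n → ℂ // z ≠ 0}),
        Function.Injective (ratOneLinearMap n z₀ z.1))
      (hcont : ∀ (z₀ : ℂ) (z : {z : Fin n → ℂ // z ≠ 0}),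
        Continuous (Projectivization.map (ratOneLinearMap n z₀ z.1) (hinj z₀ z)))
      (h : (ℂ × {z : Fin n → ℂ // z ≠ 0}) ≃ₜ
        {f : C(ℙ ℂ (Fin 2 → ℂ), ℙ ℂ (Fin (n + 1) → ℂ)) |
          (∃ (g : (Fin 2 → ℂ) →ₗ[ℂ] (Fin (n + 1) → ℂ)) (hg : Function.Injective g),
            ⇑f = Projectivization.map g hg) ∧
          f (projBasepoint 1) = projBasepoint n}),
      ∀ p : ℂ × {z : Fin n → ℂ // z ≠ 0},
        ((h p : C(ℙ ℂ (Fin 2 → ℂ), ℙ ℂ (Fin (n + 1) → ℂ))) : _ → _) =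
          Projectivization.map (ratOneLinearMap n p.1 p.2.1) (hinj p.1 p.2) := by
  refine ⟨fun z₀ z => ratOne_injective z₀ z.2,
    fun z₀ z => projmap_continuous _ _ (LinearMap.continuous_on_pi _), ?_⟩
  have hmem : ∀ p : ℂ × {z : Fin n → ℂ // z ≠ 0},
      ratMapCM n p ∈ {f : C(ℙ ℂ (Fin 2 → ℂ), ℙ ℂ (Fin (n + 1) → ℂ)) |
        (∃ (g : (Fin 2 → ℂ) →ₗ[ℂ] (Fin (n + 1) → ℂ)) (hg : Function.Injective g),
          ⇑f = Projectivization.map g hg) ∧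
        f (projBasepoint 1) = projBasepoint n} := fun p =>
    ⟨⟨ratOneLinearMap n p.1 p.2.1, ratOne_injective p.1 p.2.2, rfl⟩, ratMapCM_base p⟩
  set S := {f : C(ℙ ℂ (Fin 2 → ℂ), ℙ ℂ (Fin (n + 1) → ℂ)) |
        (∃ (g : (Fin 2 → ℂ) →ₗ[ℂ] (Fin (n + 1) → ℂ)) (hg : Function.Injective g),
          ⇑f = Projectivization.map g hg) ∧
        f (projBasepoint 1) = projBasepoint n} with hS
  let toS : (ℂ × {z : Fin n → ℂ // z ≠ 0}) → ↥S := fun p => ⟨ratMapCM n p, hmem p⟩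
  have hbij : Function.Bijective toS := by
    constructor
    · intro p p' hpp'
      exact ratMapCM_injective (congrArg (fun s : ↥S => ⇑(s.1)) hpp')
    · intro f
      obtain ⟨p, hp⟩ := ratMapCM_surjective f.1 f.2.1 f.2.2
      exact ⟨p, Subtype.ext (DFunLike.coe_injective hp)⟩
  let e : (ℂ × {z : Fin n → ℂ // z ≠ 0}) ≃ ↥S := Equiv.ofBijective toS hbij
  let E : ↥S → ℙ ℂ (Fin (n + 1) → ℂ) × ℙ ℂ (Fin (n + 1) → ℂ) :=
    fun f => (f.1 pointA, f.1 pointB)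
  have hEc : Continuous E :=
    ((continuous_eval_const pointA).comp continuous_subtype_val).prodMk
      ((continuous_eval_const pointB).comp continuous_subtype_val)
  have E_toS : ∀ p : ℂ × {z : Fin n → ℂ // z ≠ 0}, E (toS p) =
      (Projectivization.mk ℂ (vecA n p.1 p.2.1) (vecA_ne_zero _ p.2.2),
       Projectivization.mk ℂ (vecA n (1 + p.1) p.2.1) (vecA_ne_zero _ p.2.2)) :=
    fun p => Prod.ext (ratMapCM_pointA p) (ratMapCM_pointB p)
  have hsymm_cont : Continuous e.symm := by
    rw [continuous_iff_continuousAt]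
    intro f
    set p := e.symm f with hp
    have hfp : toS p = f := e.apply_symm_apply f
    obtain ⟨j, hj⟩ := Function.ne_iff.mp p.2.2
    set W := {q : ℙ ℂ (Fin (n + 1) → ℂ) × ℙ ℂ (Fin (n + 1) → ℂ) |
      q.1.rep j.succ ≠ 0 ∧ q.2.rep j.succ ≠ 0 ∧ tAux n j q.1.rep q.2.rep ≠ 0} with hW
    have hι : IsInducing (fun q : ℂ × {z : Fin n → ℂ // z ≠ 0} => (q.1, q.2.1)) :=
      IsInducing.id.prodMap IsInducing.subtypeVal
    suffices hcm : ContinuousAt ((fun q : ℂ × {z : Fin n → ℂ // z ≠ 0} =>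
        (q.1, q.2.1)) ∘ e.symm) f by
      exact hι.continuousAt_iff.mpr hcm
    have hGeq : Set.EqOn ((fun q : ℂ × {z : Fin n → ℂ // z ≠ 0} => (q.1, q.2.1)) ∘ e.symm)
        (fun f' => Gmap n j (E f').1 (E f').2) (E ⁻¹' W) := by
      intro f' hf'
      set p' := e.symm f' with hp'
      have hfp' : toS p' = f' := e.apply_symm_apply f'
      have hE' : E f' = (Projectivization.mk ℂ (vecA n p'.1 p'.2.1) (vecA_ne_zero _ p'.2.2),
          Projectivization.mk ℂ (vecA n (1 + p'.1) p'.2.1) (vecA_ne_zero _ p'.2.2)) := by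
        rw [← hfp']
        exact E_toS p'
      have hmem' := hf'
      rw [Set.mem_preimage, hE', hW, Set.mem_setOf_eq] at hmem'
      have hz'j : p'.2.1 j ≠ 0 := by
        have h1 := hmem'.1
        rw [rep_coord_ne] at h1
        simpa using h1
      show (p'.1, p'.2.1) = Gmap n j (E f').1 (E f').2
      rw [hE']
      show _ = Gmap n j (Projectivization.mk ℂ _ _) (Projectivization.mk ℂ _ _)
      rw [Gmap_mk, gAux_value j p'.1 p'.2.1 hz'j]
    have hfmem : f ∈ E ⁻¹' W := by
      rw [Set.mem_preimage, ← hfp, E_toS p, hW, Set.mem_setOf_eq]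
      refine ⟨?_, ?_, ?_⟩
      · rw [rep_coord_ne]; simpa using hj
      · rw [rep_coord_ne]; simpa using hj
      · rw [tAux_rep_mk, tAux_value]; exact inv_ne_zero hj
    have h1 : ContinuousAt (fun q : ℙ ℂ (Fin (n + 1) → ℂ) × ℙ ℂ (Fin (n + 1) → ℂ) =>
        Gmap n j q.1 q.2) (E f) := by
      have hq := (mk'_isOpenQuotientMap.prodMap mk'_isOpenQuotientMap :
        IsOpenQuotientMap (Prod.map
          (Projectivization.mk' ℂ : {u : Fin (n + 1) → ℂ // u ≠ 0} → ℙ ℂ (Fin (n + 1) → ℂ))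
          (Projectivization.mk' ℂ : {u : Fin (n + 1) → ℂ // u ≠ 0} → ℙ ℂ (Fin (n + 1) → ℂ))))
      have hEf : E f = Prod.map (Projectivization.mk' ℂ) (Projectivization.mk' ℂ)
          (⟨vecA n p.1 p.2.1, vecA_ne_zero _ p.2.2⟩,
           ⟨vecA n (1 + p.1) p.2.1, vecA_ne_zero _ p.2.2⟩) := by
        rw [← hfp, E_toS p]
        rfl
      rw [hEf, ← hq.continuousAt_comp_iff]
      have hcomp : (fun q : ℙ ℂ (Fin (n + 1) → ℂ) × ℙ ℂ (Fin (n + 1) → ℂ) =>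
          Gmap n j q.1 q.2) ∘ Prod.map (Projectivization.mk' ℂ) (Projectivization.mk' ℂ) =
          fun q : {u : Fin (n + 1) → ℂ // u ≠ 0} × {v : Fin (n + 1) → ℂ // v ≠ 0} =>
            gAux n j q.1.1 q.2.1 := by
        funext q
        show Gmap n j (Projectivization.mk' ℂ q.1) (Projectivization.mk' ℂ q.2) = _
        simp only [Projectivization.mk'_eq_mk]
        exact Gmap_mk j q.1.1 q.2.1 q.1.2 q.2.2
      rw [hcomp]
      refine gAuxPair_continuousAt j _ (by simpa using hj) (by simpa using hj) ?_
      show tAux n j (vecA n p.1 p.2.1) (vecA n (1 + p.1) p.2.1) ≠ 0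
      rw [tAux_value]
      exact inv_ne_zero hj
    have hGcont : ContinuousAt (fun f' : ↥S => Gmap n j (E f').1 (E f').2) f :=
      h1.comp hEc.continuousAt
    refine hGcont.congr ?_
    have hWopen : IsOpen (E ⁻¹' W) := (W_isOpen j).preimage hEc
    exact Filter.eventuallyEq_of_mem (hWopen.mem_nhds hfmem) (fun x hx => (hGeq hx).symm)
  refine ⟨⟨e, ratMapCM_continuous.subtype_mk _, hsymm_cont⟩, fun p => rfl⟩

end Main3
end

section
/- Let n ≥ 1 and k ≥ 0 be integers and r > 0 a real number. The map σ : Rat_{k,2r}(n) → Rat_{k,r}(n) sending (g(X), p₁(X), …, pₙ(X)) to (2^{-k}·g(2X), 2^{-k}·p₁(2X), …, 2^{-k}·pₙ(2X)) (i.e. f(z) ↦ f(2z), renormalized so the denominator stays monic) is well defined and continuous, commutes with the U(n)-action, and is a homotopy inverse to the inclusion Rat_{k,r}(n) ⊆ Rat_{k,2r}(n): the composite of σ with the inclusion, in either order, is homotopic to the corresponding identity map. -/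
open Polynomial

/-- The monic denominator `g = X^k + ∑ aᵢ Xⁱ` determined by its lower coefficients. -/
noncomputable def denomPoly (k : ℕ) (a : Fin k → ℂ) : Polynomial ℂ :=
  X ^ k + ∑ i : Fin k, C (a i) * X ^ (i : ℕ)

/-- A numerator `p = ∑ cᵢ Xⁱ` of degree `< k` determined by its coefficients. -/
noncomputable def numerPoly (k : ℕ) (c : Fin k → ℂ) : Polynomial ℂ :=
  ∑ i : Fin k, C (c i) * X ^ (i : ℕ)

/-- `Rat_k(n)` in coefficient coordinates: tuples `(g, p₁, …, pₙ)` with `g` monic of degree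
`k`, `deg pₗ < k`, and no common root. -/
def ratSpace (n k : ℕ) : Set ((Fin k → ℂ) × (Fin n → Fin k → ℂ)) :=
  {x | ¬ ∃ z : ℂ, (denomPoly k x.1).IsRoot z ∧ ∀ l, (numerPoly k (x.2 l)).IsRoot z}

/-- `Rat_{k,r}(n)`: the subspace of `Rat_k(n)` of tuples whose poles (roots of `g`) all have
modulus strictly less than `r`. -/
def ratSpaceLt (n k : ℕ) (r : ℝ) : Set ((Fin k → ℂ) × (Fin n → Fin k → ℂ)) :=
  {x | x ∈ ratSpace n k ∧ ∀ z : ℂ, (denomPoly k x.1).IsRoot z → ‖z‖ < r}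

/-- The map `f(z) ↦ f(2z)` (renormalized so the denominator stays monic) in coefficient
coordinates: each coefficient of `X^i` is multiplied by `2^{i-k}`. -/
noncomputable def ratHalfPoles (n k : ℕ) (x : (Fin k → ℂ) × (Fin n → Fin k → ℂ)) :
    (Fin k → ℂ) × (Fin n → Fin k → ℂ) :=
  (fun i => x.1 i * 2 ^ (i : ℕ) / 2 ^ k, fun l i => x.2 l i * 2 ^ (i : ℕ) / 2 ^ k)

/-- The `U(n)`-action by postcomposition, in coefficient coordinates:
`A · (g, p₁, …, pₙ) = (g, ∑ A₁ₘ pₘ, …, ∑ Aₙₘ pₘ)`. -/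
noncomputable def ratUnitaryAction (n k : ℕ) (A : Matrix.unitaryGroup (Fin n) ℂ)
    (x : (Fin k → ℂ) × (Fin n → Fin k → ℂ)) : (Fin k → ℂ) × (Fin n → Fin k → ℂ) :=
  (x.1, fun l i => ∑ m : Fin n, (A : Matrix (Fin n) (Fin n) ℂ) l m * x.2 m i)

noncomputable def scaleMap (n k : ℕ) (c : ℂ) (x : (Fin k → ℂ) × (Fin n → Fin k → ℂ)) :
    (Fin k → ℂ) × (Fin n → Fin k → ℂ) :=
  (fun i => x.1 i * c ^ (i : ℕ) / c ^ k, fun l i => x.2 l i * c ^ (i : ℕ) / c ^ k)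

lemma eval_denom_scale (k : ℕ) (a : Fin k → ℂ) {c : ℂ} (hc : c ≠ 0) (z : ℂ) :
    (denomPoly k (fun i => a i * c ^ (i : ℕ) / c ^ k)).eval z
      = (denomPoly k a).eval (c * z) / c ^ k := by
  have hck : (c : ℂ) ^ k ≠ 0 := pow_ne_zero _ hc
  simp only [denomPoly, eval_add, eval_pow, eval_X, eval_finset_sum, eval_mul, eval_C, mul_pow]
  rw [add_div, Finset.sum_div]
  congr 1
  · field_simp
  · exact Finset.sum_congr rfl fun i _ => by field_simp

lemma eval_numer_scale (k : ℕ) (a : Fin k → ℂ) (c : ℂ) (z : ℂ) :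
    (numerPoly k (fun i => a i * c ^ (i : ℕ) / c ^ k)).eval z
      = (numerPoly k a).eval (c * z) / c ^ k := by
  simp only [numerPoly, eval_finset_sum, eval_mul, eval_C, eval_pow, eval_X, mul_pow]
  rw [Finset.sum_div]
  exact Finset.sum_congr rfl fun i _ => by ring

lemma isRoot_denom_scale {k : ℕ} {a : Fin k → ℂ} {c : ℂ} (hc : c ≠ 0) {z : ℂ} :
    (denomPoly k (fun i => a i * c ^ (i : ℕ) / c ^ k)).IsRoot z ↔
      (denomPoly k a).IsRoot (c * z) := by
  simp [Polynomial.IsRoot, eval_denom_scale k a hc, _root_.div_eq_zero_iff, pow_ne_zero _ hc]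

lemma isRoot_numer_scale {k : ℕ} {a : Fin k → ℂ} {c : ℂ} (hc : c ≠ 0) {z : ℂ} :
    (numerPoly k (fun i => a i * c ^ (i : ℕ) / c ^ k)).IsRoot z ↔
      (numerPoly k a).IsRoot (c * z) := by
  simp [Polynomial.IsRoot, eval_numer_scale k a c, _root_.div_eq_zero_iff, pow_ne_zero _ hc]

lemma scaleMap_mem (n k : ℕ) {R R' : ℝ} {c : ℂ} (hc : c ≠ 0)
    (hR : ∀ z : ℂ, ‖c * z‖ < R → ‖z‖ < R')
    {x : (Fin k → ℂ) × (Fin n → Fin k → ℂ)} (hx : x ∈ ratSpaceLt n k R) :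
    scaleMap n k c x ∈ ratSpaceLt n k R' := by
  obtain ⟨h1, h2⟩ := hx
  constructor
  · rintro ⟨z, hz, hz'⟩
    exact h1 ⟨c * z, (isRoot_denom_scale hc).mp hz,
      fun l => (isRoot_numer_scale hc).mp (hz' l)⟩
  · intro z hz
    exact hR z (h2 _ ((isRoot_denom_scale hc).mp hz))

lemma scaleMap_continuous {n k : ℕ} {α : Type*} [TopologicalSpace α] {c : α → ℂ}
    {f : α → (Fin k → ℂ) × (Fin n → Fin k → ℂ)} (hc : Continuous c)
    (hc0 : ∀ a, c a ≠ 0) (hf : Continuous f) :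
    Continuous (fun a => scaleMap n k (c a) (f a)) := by
  unfold scaleMap
  refine Continuous.prodMk (continuous_pi fun i => ?_)
    (continuous_pi fun l => continuous_pi fun i => ?_)
  · exact (((continuous_apply i).comp (continuous_fst.comp hf)).mul (hc.pow _)).div
      (hc.pow _) fun a => pow_ne_zero _ (hc0 a)
  · exact (((continuous_apply i).comp ((continuous_apply l).comp
      (continuous_snd.comp hf))).mul (hc.pow _)).div
      (hc.pow _) fun a => pow_ne_zero _ (hc0 a)

lemma ratHalfPoles_eq_scaleMap (n k : ℕ) : ratHalfPoles n k = scaleMap n k 2 := rfl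

lemma homMain (n k : ℕ) (R : ℝ)
    (f : C(↥(ratSpaceLt n k R), ↥(ratSpaceLt n k R)))
    (hf : ∀ x, (f x : (Fin k → ℂ) × (Fin n → Fin k → ℂ)) = scaleMap n k 2 x.val) :
    ContinuousMap.Homotopic f (ContinuousMap.id _) := by
  have hmem : ∀ (t : unitInterval) (x : ↥(ratSpaceLt n k R)),
      scaleMap n k ((2 - (t : ℝ) : ℝ) : ℂ) x.val ∈ ratSpaceLt n k R := by
    intro t x
    have ht := t.2.2
    have h1 : (1:ℝ) ≤ 2 - (t:ℝ) := by linarith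
    have hc : ((2 - (t:ℝ) : ℝ) : ℂ) ≠ 0 := Complex.ofReal_ne_zero.mpr (by linarith)
    refine scaleMap_mem n k hc (fun z hz => ?_) x.2
    have habs : ‖((2 - (t:ℝ) : ℝ) : ℂ)‖ = 2 - (t:ℝ) := by
      rw [Complex.norm_real, Real.norm_eq_abs]; exact abs_of_pos (by linarith)
    calc ‖z‖ ≤ (2 - (t:ℝ)) * ‖z‖ :=
          le_mul_of_one_le_left (by positivity) h1
      _ = ‖((2 - (t:ℝ) : ℝ) : ℂ) * z‖ := by rw [norm_mul, habs]
      _ < R := hz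
  refine ⟨⟨⟨fun p => ⟨scaleMap n k ((2 - (p.1 : ℝ) : ℝ) : ℂ) p.2.val, hmem p.1 p.2⟩,
    ?_⟩, ?_, ?_⟩⟩
  · refine Continuous.subtype_mk (scaleMap_continuous ?_ (fun p => ?_) ?_) _
    · exact Complex.continuous_ofReal.comp
        ((continuous_const.sub continuous_subtype_val).comp continuous_fst)
    · have := p.1.2.2
      exact Complex.ofReal_ne_zero.mpr (by linarith)
    · exact continuous_subtype_val.comp continuous_snd
  · intro x
    apply Subtype.ext
    rw [hf]
    norm_num
  · intro x
    apply Subtype.ext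
    show scaleMap n k ((2 - ((1 : unitInterval) : ℝ) : ℝ) : ℂ) x.val = x.val
    norm_num [scaleMap]

/-- The map `σ : Rat_{k,2r}(n) → Rat_{k,r}(n)`, `f(z) ↦ f(2z)` (suitably renormalized), is
well defined and continuous, commutes with the `U(n)`-action, and is a homotopy inverse to
the inclusion `Rat_{k,r}(n) ⊆ Rat_{k,2r}(n)`. -/
theorem ratHalfPoles_homotopy_inverse (n k : ℕ) (hn : 1 ≤ n) (r : ℝ) (hr : 0 < r) :
    (∀ x ∈ ratSpaceLt n k (2 * r), ratHalfPoles n k x ∈ ratSpaceLt n k r) ∧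
    Continuous (ratHalfPoles n k) ∧
    (∀ (A : Matrix.unitaryGroup (Fin n) ℂ) (x : (Fin k → ℂ) × (Fin n → Fin k → ℂ)),
      ratHalfPoles n k (ratUnitaryAction n k A x) = ratUnitaryAction n k A (ratHalfPoles n k x)) ∧
    ∃ (hsub : ratSpaceLt n k r ⊆ ratSpaceLt n k (2 * r))
      (σ : C(↥(ratSpaceLt n k (2 * r)), ↥(ratSpaceLt n k r))),
      (∀ x : ↥(ratSpaceLt n k (2 * r)), (σ x : (Fin k → ℂ) × (Fin n → Fin k → ℂ)) =
          ratHalfPoles n k ↑x) ∧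
      ContinuousMap.Homotopic
        ((⟨Set.inclusion hsub, continuous_inclusion hsub⟩ :
            C(↥(ratSpaceLt n k r), ↥(ratSpaceLt n k (2 * r)))).comp σ)
        (ContinuousMap.id _) ∧
      ContinuousMap.Homotopic
        (σ.comp (⟨Set.inclusion hsub, continuous_inclusion hsub⟩ :
            C(↥(ratSpaceLt n k r), ↥(ratSpaceLt n k (2 * r)))))
        (ContinuousMap.id _) := by
  have h2 : (2 : ℂ) ≠ 0 := two_ne_zero
  have claim1 : ∀ x ∈ ratSpaceLt n k (2 * r), ratHalfPoles n k x ∈ ratSpaceLt n k r := by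
    intro x hx
    rw [ratHalfPoles_eq_scaleMap]
    refine scaleMap_mem n k h2 (fun z hz => ?_) hx
    rw [norm_mul, Complex.norm_two] at hz
    linarith
  have cont : Continuous (ratHalfPoles n k) := by
    rw [ratHalfPoles_eq_scaleMap]
    exact scaleMap_continuous continuous_const (fun _ => h2) continuous_id
  refine ⟨claim1, cont, ?_, ?_⟩
  · intro A x
    refine Prod.ext rfl ?_
    funext l i
    show (∑ m : Fin n, (A : Matrix (Fin n) (Fin n) ℂ) l m * x.2 m i) * 2 ^ (i : ℕ) / 2 ^ k
      = ∑ m : Fin n, (A : Matrix (Fin n) (Fin n) ℂ) l m * (x.2 m i * 2 ^ (i : ℕ) / 2 ^ k)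
    rw [Finset.sum_mul, Finset.sum_div]
    exact Finset.sum_congr rfl fun m _ => by ring
  · have hsub : ratSpaceLt n k r ⊆ ratSpaceLt n k (2 * r) := by
      rintro x ⟨hx1, hx2⟩
      exact ⟨hx1, fun z hz => lt_of_lt_of_le (hx2 z hz) (by linarith)⟩
    refine ⟨hsub, ⟨fun x => ⟨ratHalfPoles n k x.val, claim1 _ x.2⟩,
      Continuous.subtype_mk (cont.comp continuous_subtype_val) _⟩, fun x => rfl, ?_, ?_⟩
    · exact homMain n k (2 * r) _ fun x => rfl
    · exact homMain n k r _ fun x => rfl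
end
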